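/- Suppose q and q+2 are both odd prime powers and let G = F_q × F_{q+2} (additive group of order q(q+2)). Then there exists a q-dimensional difference set in G with parameters (4m−1, 2m−1, m−1) for m = (q+1)²/4; explicitly, with α, β primitive elements of F_q, F_{q+2}, the set D = E_1 ∪ E_2 ∪ E_3 ⊆ G^q works, where E_1 = {(0, a^{(i,j)}_0, ..., a^{(i,j)}_{q-2})}, E_2 = {(0, a^{(i,j)}_1, ..., a^{(i,j)}_{q-1})} over i = 0,...,(q−3)/2, j = 0,...,(q−1)/2, E_3 = {(0,...,0)} ∪ {(0, b^{(i)}_0, ..., b^{(i)}_{q-2}) : i = 0,...,q−2}, with a^{(i,j)}_x = (α^{2i+x}, β^{2j+x}) and b^{(i)}_x = (α^{i+x}, 0). -/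

import Mathlib

open Finset

set_option linter.unusedSectionVars false
set_option linter.unusedVariables false
namespace TPP


variable {K : Type*} [Field K] [Fintype K] [DecidableEq K]

def uu (a : K) : ℤ := if a = 0 then 0 else 1
def zz (a : K) : ℤ := if a = 0 then 1 else 0
def vv (a : K) : ℤ := if a = 0 then 2 else 1

lemma uu_eq (a : K) : uu a = 1 - zz a := by unfold uu zz; split <;> ring
lemma vv_eq (a : K) : vv a = 1 + zz a := by unfold vv zz; split <;> ring
lemma zz_neg (a : K) : zz (-a) = zz a := by unfold zz; simp
lemma zz_zero : zz (0 : K) = 1 := if_pos rfl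
lemma uu_zero : uu (0 : K) = 0 := if_pos rfl
lemma vv_zero : vv (0 : K) = 2 := if_pos rfl
lemma uu_ne {a : K} (h : a ≠ 0) : uu a = 1 := if_neg h
lemma zz_ne {a : K} (h : a ≠ 0) : zz a = 0 := if_neg h
lemma vv_ne {a : K} (h : a ≠ 0) : vv a = 1 := if_neg h

lemma sum_zz_mul (f : K → ℤ) : ∑ a, zz a * f a = f 0 := by
  have : ∀ a : K, zz a * f a = if a = 0 then f a else 0 := by
    intro a; unfold zz; split <;> simp
  rw [Finset.sum_congr rfl fun a _ => this a]; simp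

lemma sum_mul_zz (f : K → ℤ) (c : K) : ∑ a, f a * zz (a - c) = f c := by
  have : ∀ a : K, f a * zz (a - c) = if a = c then f a else 0 := by
    intro a; unfold zz; rcases eq_or_ne a c with rfl | h
    · simp
    · rw [if_neg (sub_ne_zero.mpr h), if_neg h, mul_zero]
  rw [Finset.sum_congr rfl fun a _ => this a]; simp

lemma sum_shift (f : K → ℤ) (c : K) : ∑ a, f (a - c) = ∑ a, f a :=
  Fintype.sum_equiv (Equiv.subRight c) _ f (fun a => rfl)

lemma sum_zz (c : K) : ∑ a, zz (a - c) = (1:ℤ) := by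
  rw [sum_shift]
  have := sum_mul_zz (fun _ : K => (1:ℤ)) 0
  simpa using this

lemma sum_zz_mul' (f : K → ℤ) (c : K) : ∑ a, zz a * f (a - c) = f (-c) := by
  rw [sum_zz_mul (fun a => f (a - c)), zero_sub]

lemma sum_one : ∑ _a : K, (1:ℤ) = (Fintype.card K : ℤ) := by simp

-- now χ lemmas
variable (hoddK : Odd (Fintype.card K))

lemma char_ne_two (hoddK : Odd (Fintype.card K)) : ringChar K ≠ 2 := by
  intro h
  have := FiniteField.even_card_iff_char_two.mp h
  rw [Nat.odd_iff] at hoddK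
  omega

lemma sum_chi (hoddK : Odd (Fintype.card K)) : ∑ a, quadraticChar K a = 0 :=
  quadraticChar_sum_zero (char_ne_two hoddK)

lemma chi_sq {a : K} (h : a ≠ 0) : quadraticChar K a * quadraticChar K a = 1 := by
  have := quadraticChar_sq_one h
  rwa [pow_two] at this

lemma chi_mul_self (a : K) : quadraticChar K a * quadraticChar K a = 1 - zz a := by
  rcases eq_or_ne a 0 with rfl | h
  · simp [zz_zero]
  · rw [chi_sq h, zz_ne h]; ring

lemma chi_neg (a : K) : quadraticChar K (-a) = quadraticChar K (-1) * quadraticChar K a := by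
  rw [← map_mul]; ring_nf

/-- The key character sum: `∑ χ(a)χ(a-c) = -1` for `c ≠ 0`. -/
lemma sum_chi_chi (hoddK : Odd (Fintype.card K)) {c : K} (hc : c ≠ 0) :
    ∑ a, quadraticChar K a * quadraticChar K (a - c) = -1 := by
  have step1 : ∀ a : K, a ≠ 0 →
      quadraticChar K a * quadraticChar K (a - c) = quadraticChar K (1 - c * a⁻¹) := by
    intro a ha
    rw [← map_mul]
    have h2 : a * (a - c) = a ^ 2 * (1 - c * a⁻¹) := by field_simp
    rw [h2, map_mul, quadraticChar_sq_one' ha, one_mul]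
  rw [← Finset.sum_erase_add Finset.univ _ (Finset.mem_univ (0:K))]
  have h0 : quadraticChar K (0:K) * quadraticChar K (0 - c) = 0 := by
    rw [quadraticChar_zero, zero_mul]
  rw [h0, add_zero]
  have hbij : ∑ a ∈ Finset.univ.erase (0:K), quadraticChar K a * quadraticChar K (a - c)
      = ∑ w ∈ Finset.univ.erase (1:K), quadraticChar K w := by
    apply Finset.sum_bij' (i := fun a _ => 1 - c * a⁻¹) (j := fun w _ => c * (1 - w)⁻¹)
    · intro a ha
      simp only [Finset.mem_erase, Finset.mem_univ, and_true] at ha ⊢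
      intro h
      have : c * a⁻¹ = 0 := by linear_combination -h
      rcases mul_eq_zero.mp this with h' | h'
      · exact hc h'
      · exact ha (by simpa using inv_eq_zero.mp h')
    · intro w hw
      simp only [Finset.mem_erase, Finset.mem_univ, and_true] at hw ⊢
      intro h
      rcases mul_eq_zero.mp h with h' | h'
      · exact hc h'
      · have : (1:K) - w ≠ 0 := sub_ne_zero.mpr (Ne.symm hw)
        exact this (by simpa using inv_eq_zero.mp h')
    · intro a ha
      simp only [Finset.mem_erase, Finset.mem_univ, and_true] at ha
      have h1 : (1:K) - (1 - c * a⁻¹) = c * a⁻¹ := by ring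
      rw [h1]
      field_simp
    · intro w hw
      simp only [Finset.mem_erase, Finset.mem_univ, and_true] at hw
      have h1 : (1:K) - w ≠ 0 := sub_ne_zero.mpr (Ne.symm hw)
      field_simp
      ring
    · intro a ha
      simp only [Finset.mem_erase, Finset.mem_univ, and_true] at ha
      exact step1 a ha
  rw [hbij]
  have := Finset.sum_erase_add Finset.univ (fun w => quadraticChar K w) (Finset.mem_univ (1:K))
  rw [sum_chi hoddK] at this
  simp only [map_one] at this
  linarith [this]

/-! ### Convolution values -/

lemma conv_uu_uu (c : K) :
    ∑ a, uu a * uu (a - c) = (Fintype.card K : ℤ) - 1 - 1 + zz c := by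
  have : ∀ a : K, uu a * uu (a - c) =
      1 - zz a - zz (a - c) + zz a * zz (a - c) := by
    intro a; rw [uu_eq, uu_eq]; ring
  rw [Finset.sum_congr rfl fun a _ => this a]
  simp only [Finset.sum_add_distrib, Finset.sum_sub_distrib]
  rw [sum_one, sum_zz, sum_zz_mul' zz c, zz_neg]
  have : ∑ a : K, zz a = 1 := by
    have := sum_zz (0 : K); simpa using this
  rw [this]

lemma conv_vv_vv (c : K) :
    ∑ a, vv a * vv (a - c) = (Fintype.card K : ℤ) + 1 + 1 + zz c := by
  have : ∀ a : K, vv a * vv (a - c) =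
      1 + zz a + zz (a - c) + zz a * zz (a - c) := by
    intro a; rw [vv_eq, vv_eq]; ring
  rw [Finset.sum_congr rfl fun a _ => this a]
  simp only [Finset.sum_add_distrib]
  rw [sum_one, sum_zz, sum_zz_mul' zz c, zz_neg]
  have : ∑ a : K, zz a = 1 := by
    have := sum_zz (0 : K); simpa using this
  rw [this]

lemma conv_uu_zz (c : K) : ∑ a, uu a * zz (a - c) = uu c := sum_mul_zz uu c

lemma conv_zz_uu (c : K) : ∑ a, zz a * uu (a - c) = uu c := by
  rw [sum_zz_mul' uu c]; unfold uu; simp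

lemma conv_vv_zz (c : K) : ∑ a, vv a * zz (a - c) = vv c := sum_mul_zz vv c

lemma conv_zz_vv (c : K) : ∑ a, zz a * vv (a - c) = vv c := by
  rw [sum_zz_mul' vv c]; unfold vv; simp

lemma conv_zz_zz (c : K) : ∑ a, zz a * zz (a - c) = zz c := by
  rw [sum_zz_mul' zz c, zz_neg]

lemma conv_uu_chi (hoddK : Odd (Fintype.card K)) (c : K) :
    ∑ a, uu a * quadraticChar K (a - c) = - quadraticChar K (-c) := by
  have : ∀ a : K, uu a * quadraticChar K (a - c) =
      quadraticChar K (a - c) - zz a * quadraticChar K (a - c) := by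
    intro a; rw [uu_eq]; ring
  rw [Finset.sum_congr rfl fun a _ => this a, Finset.sum_sub_distrib,
    sum_shift, sum_chi hoddK, sum_zz_mul' (quadraticChar K) c]
  ring

lemma conv_chi_uu (hoddK : Odd (Fintype.card K)) (c : K) :
    ∑ a, quadraticChar K a * uu (a - c) = - quadraticChar K c := by
  have : ∀ a : K, quadraticChar K a * uu (a - c) =
      quadraticChar K a - quadraticChar K a * zz (a - c) := by
    intro a; rw [uu_eq]; ring
  rw [Finset.sum_congr rfl fun a _ => this a, Finset.sum_sub_distrib,
    sum_chi hoddK, sum_mul_zz (quadraticChar K) c]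
  ring

lemma conv_zz_chi (c : K) : ∑ a, zz a * quadraticChar K (a - c) = quadraticChar K (-c) :=
  sum_zz_mul' (quadraticChar K) c

lemma conv_chi_zz (c : K) : ∑ a, quadraticChar K a * zz (a - c) = quadraticChar K c :=
  sum_mul_zz (quadraticChar K) c

lemma conv_vv_chi (hoddK : Odd (Fintype.card K)) (c : K) :
    ∑ a, vv a * quadraticChar K (a - c) = quadraticChar K (-c) := by
  have : ∀ a : K, vv a * quadraticChar K (a - c) =
      quadraticChar K (a - c) + zz a * quadraticChar K (a - c) := by
    intro a; rw [vv_eq]; ring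
  rw [Finset.sum_congr rfl fun a _ => this a, Finset.sum_add_distrib,
    sum_shift, sum_chi hoddK, sum_zz_mul' (quadraticChar K) c]
  ring

lemma conv_chi_vv (hoddK : Odd (Fintype.card K)) (c : K) :
    ∑ a, quadraticChar K a * vv (a - c) = quadraticChar K c := by
  have : ∀ a : K, quadraticChar K a * vv (a - c) =
      quadraticChar K a + quadraticChar K a * zz (a - c) := by
    intro a; rw [vv_eq]; ring
  rw [Finset.sum_congr rfl fun a _ => this a, Finset.sum_add_distrib,
    sum_chi hoddK, sum_mul_zz (quadraticChar K) c]
  ring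

lemma conv_chi_chi_zero (hoddK : Odd (Fintype.card K)) :
    ∑ a, quadraticChar K a * quadraticChar K (a - 0) = (Fintype.card K : ℤ) - 1 := by
  have : ∀ a : K, quadraticChar K a * quadraticChar K (a - 0) = 1 - zz a := by
    intro a; rw [sub_zero, chi_mul_self]
  rw [Finset.sum_congr rfl fun a _ => this a, Finset.sum_sub_distrib, sum_one]
  have : ∑ a : K, zz a = 1 := by have := sum_zz (0 : K); simpa using this
  rw [this]

lemma sum_uu : ∑ a : K, uu a = (Fintype.card K : ℤ) - 1 := by
  have : ∀ a : K, uu a = 1 - zz a := uu_eq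
  rw [Finset.sum_congr rfl fun a _ => this a, Finset.sum_sub_distrib, sum_one]
  have : ∑ a : K, zz a = 1 := by have := sum_zz (0 : K); simpa using this
  rw [this]

lemma sum_vv : ∑ a : K, vv a = (Fintype.card K : ℤ) + 1 := by
  have : ∀ a : K, vv a = 1 + zz a := vv_eq
  rw [Finset.sum_congr rfl fun a _ => this a, Finset.sum_add_distrib, sum_one]
  have : ∑ a : K, zz a = 1 := by have := sum_zz (0 : K); simpa using this
  rw [this]

lemma sum_zz_only : ∑ a : K, zz a = 1 := by have := sum_zz (0 : K); simpa using this

/-! ### Generator lemmas -/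

section Generator

variable (α : K) (hsurj : ∀ x : K, x ≠ 0 → ∃ m : ℕ, α ^ m = x)
  (hcard3 : 3 ≤ Fintype.card K)

include hsurj hcard3

lemma alpha_ne_zero : α ≠ 0 := by
  have h2 : ({0, 1} : Finset K).card ≤ 2 := Finset.card_insert_le _ _ |>.trans (by simp)
  have hne : (Finset.univ \ ({0, 1} : Finset K)).Nonempty := by
    apply Finset.card_pos.mp
    rw [Finset.card_sdiff_of_subset (Finset.subset_univ _), Finset.card_univ]
    omega
  obtain ⟨x, hx⟩ := hne
  rw [Finset.mem_sdiff] at hx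
  have hx := hx.2
  simp only [Finset.mem_insert, Finset.mem_singleton, not_or] at hx
  obtain ⟨m, hm⟩ := hsurj x hx.1
  intro h0
  rw [h0] at hm
  rcases Nat.eq_zero_or_pos m with rfl | hmpos
  · exact hx.2 (by simpa using hm.symm)
  · rw [zero_pow (by omega : m ≠ 0)] at hm
    exact hx.1 hm.symm

lemma alpha_pow_n : α ^ (Fintype.card K - 1) = 1 :=
  FiniteField.pow_card_sub_one_eq_one α (alpha_ne_zero α hsurj hcard3)

lemma alpha_pow_mod (m : ℕ) : α ^ m = α ^ (m % (Fintype.card K - 1)) := by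
  conv_lhs => rw [← Nat.div_add_mod m (Fintype.card K - 1)]
  rw [pow_add, pow_mul, alpha_pow_n α hsurj hcard3, one_pow, one_mul]

lemma surj_lt : ∀ x : K, x ≠ 0 → ∃ m : ℕ, m < Fintype.card K - 1 ∧ α ^ m = x := by
  intro x hx
  obtain ⟨m, hm⟩ := hsurj x hx
  refine ⟨m % (Fintype.card K - 1), Nat.mod_lt _ (by omega), ?_⟩
  rw [← alpha_pow_mod α hsurj hcard3, hm]

lemma image_powers :
    (Finset.range (Fintype.card K - 1)).image (fun i => α ^ i)
      = Finset.univ.filter (fun x : K => x ≠ 0) := by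
  apply Finset.eq_of_subset_of_card_le
  · intro w hw
    simp only [Finset.mem_image, Finset.mem_range] at hw
    obtain ⟨i, _, rfl⟩ := hw
    simp only [Finset.mem_filter, Finset.mem_univ, true_and]
    exact pow_ne_zero _ (alpha_ne_zero α hsurj hcard3)
  · have h1 : Finset.univ.filter (fun x : K => x ≠ 0) = Finset.univ.erase 0 := by
      rw [Finset.filter_ne']
    apply Finset.card_le_card
    intro w hw
    simp only [Finset.mem_filter, Finset.mem_univ, true_and] at hw
    simp only [Finset.mem_image, Finset.mem_range]
    obtain ⟨m, hm, hmx⟩ := surj_lt α hsurj hcard3 w hw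
    exact ⟨m, hm, hmx⟩

lemma pow_injOn : Set.InjOn (fun i => α ^ i) (Finset.range (Fintype.card K - 1)) := by
  rw [← Finset.card_image_iff, image_powers α hsurj hcard3]
  rw [Finset.filter_ne', Finset.card_erase_of_mem (Finset.mem_univ _), Finset.card_univ,
    Finset.card_range]

lemma pow_inj {i j : ℕ} (hi : i < Fintype.card K - 1) (hj : j < Fintype.card K - 1)
    (h : α ^ i = α ^ j) : i = j :=
  pow_injOn α hsurj hcard3 (by simpa using hi) (by simpa using hj) h

lemma chi_alpha (hoddK : Odd (Fintype.card K)) : quadraticChar K α = -1 := by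
  obtain ⟨b, hb⟩ := quadraticChar_exists_neg_one (char_ne_two hoddK)
  have hb0 : b ≠ 0 := by
    intro h; rw [h, quadraticChar_zero] at hb; omega
  obtain ⟨m, hm⟩ := hsurj b hb0
  rcases quadraticChar_dichotomy (alpha_ne_zero α hsurj hcard3) with h | h
  · exfalso
    rw [← hm, map_pow, h, one_pow] at hb
    omega
  · exact h

lemma chi_pow (hoddK : Odd (Fintype.card K)) (m : ℕ) :
    quadraticChar K (α ^ m) = (-1) ^ m := by
  rw [map_pow, chi_alpha α hsurj hcard3 hoddK]

/-- membership in the "all powers times a constant" class -/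
lemma mem_all {c : K} (hc : c ≠ 0) (w : K) :
    (∃ i, i < Fintype.card K - 1 ∧ c * α ^ i = w) ↔ w ≠ 0 := by
  constructor
  · rintro ⟨i, _, rfl⟩
    exact mul_ne_zero hc (pow_ne_zero _ (alpha_ne_zero α hsurj hcard3))
  · intro hw
    obtain ⟨m, hm, hmx⟩ := surj_lt α hsurj hcard3 (w * c⁻¹) (by
      exact mul_ne_zero hw (inv_ne_zero hc))
    refine ⟨m, hm, ?_⟩
    rw [hmx]
    field_simp

lemma mem_even (hoddK : Odd (Fintype.card K)) {c : K} (hc : c ≠ 0) (w : K) :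
    (∃ i, i < (Fintype.card K - 1) / 2 ∧ c * α ^ (2 * i) = w) ↔
      quadraticChar K w = quadraticChar K c := by
  have hq2 : Fintype.card K % 2 = 1 := Nat.odd_iff.mp hoddK
  have hq3 := hcard3
  constructor
  · rintro ⟨i, hi, rfl⟩
    rw [map_mul, chi_pow α hsurj hcard3 hoddK, pow_mul]
    norm_num
  · intro hw
    have hw0 : w ≠ 0 := by
      intro h; rw [h, quadraticChar_zero] at hw
      rcases quadraticChar_dichotomy hc with h' | h' <;> omega
    obtain ⟨m, hm, hmx⟩ := surj_lt α hsurj hcard3 (w * c⁻¹)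
      (mul_ne_zero hw0 (inv_ne_zero hc))
    have hwc : w = c * α ^ m := by rw [hmx]; field_simp
    have hchi : quadraticChar K w = quadraticChar K c * (-1) ^ m := by
      rw [hwc, map_mul, chi_pow α hsurj hcard3 hoddK]
    rw [hchi] at hw
    have hcne : quadraticChar K c ≠ 0 := by
      rcases quadraticChar_dichotomy hc with h' | h' <;> (rw [h']; omega)
    have hme : (-1 : ℤ) ^ m = 1 := by
      have := mul_left_cancel₀ hcne (hw.trans (mul_one _).symm)
      linarith [this]
    have hmeven : Even m := by
      rcases Nat.even_or_odd m with h | h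
      · exact h
      · rw [Odd.neg_one_pow h] at hme; omega
    obtain ⟨k, rfl⟩ := hmeven
    refine ⟨k, by omega, ?_⟩
    rw [hwc]
    ring_nf

lemma mem_odd (hoddK : Odd (Fintype.card K)) {c : K} (hc : c ≠ 0) (w : K) :
    (∃ i, i < (Fintype.card K - 1) / 2 ∧ c * α ^ (2 * i + 1) = w) ↔
      quadraticChar K w = -quadraticChar K c := by
  have hq2 : Fintype.card K % 2 = 1 := Nat.odd_iff.mp hoddK
  have hq3 := hcard3
  constructor
  · rintro ⟨i, hi, rfl⟩
    rw [map_mul, chi_pow α hsurj hcard3 hoddK, pow_add, pow_mul]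
    norm_num
  · intro hw
    have hw0 : w ≠ 0 := by
      intro h; rw [h, quadraticChar_zero] at hw
      rcases quadraticChar_dichotomy hc with h' | h' <;> (rw [h'] at hw; omega)
    obtain ⟨m, hm, hmx⟩ := surj_lt α hsurj hcard3 (w * c⁻¹)
      (mul_ne_zero hw0 (inv_ne_zero hc))
    have hwc : w = c * α ^ m := by rw [hmx]; field_simp
    have hchi : quadraticChar K w = quadraticChar K c * (-1) ^ m := by
      rw [hwc, map_mul, chi_pow α hsurj hcard3 hoddK]
    rw [hchi] at hw
    have hcne : quadraticChar K c ≠ 0 := by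
      rcases quadraticChar_dichotomy hc with h' | h' <;> (rw [h']; omega)
    have hme : (-1 : ℤ) ^ m = -1 := by
      have h1 : quadraticChar K c * (-1) ^ m = quadraticChar K c * (-1) := by
        rw [hw]; ring
      have := mul_left_cancel₀ hcne h1
      linarith [this]
    have hmodd : Odd m := by
      rcases Nat.even_or_odd m with h | h
      · rw [Even.neg_one_pow h] at hme; omega
      · exact h
    obtain ⟨k, rfl⟩ := hmodd
    refine ⟨k, by omega, ?_⟩
    rw [hwc]

end Generator

/-! ### The twin prime power difference set -/

section Product

variable {K' : Type*} [Field K'] [Fintype K'] [DecidableEq K']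

def Tpred (δ : ℤ) (w : K × K') : Prop :=
  w = 0 ∨ (w.1 ≠ 0 ∧ w.2 = 0) ∨ quadraticChar K w.1 * quadraticChar K' w.2 = δ

instance (δ : ℤ) : DecidablePred (Tpred (K := K) (K' := K') δ) := fun w => by
  unfold Tpred; infer_instance

def Tset (δ : ℤ) : Finset (K × K') := Finset.univ.filter (Tpred δ)

def tInd (δ : ℤ) (w : K × K') : ℤ := if Tpred δ w then 1 else 0

lemma two_tInd {δ : ℤ} (hδ : δ = 1 ∨ δ = -1) (w : K × K') :
    2 * tInd δ w = uu w.1 * vv w.2 + 2 * (zz w.1 * zz w.2)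
      + δ * (quadraticChar K w.1 * quadraticChar K' w.2) := by
  by_cases h1 : w.1 = 0
  · by_cases h2 : w.2 = 0
    · have hw : w = 0 := Prod.ext h1 h2
      have : Tpred δ w := Or.inl hw
      rw [tInd, if_pos this, h1, h2]
      simp [uu_zero, zz_zero, quadraticChar_zero]
    · have hnw : ¬ Tpred δ w := by
        unfold Tpred
        push_neg
        refine ⟨?_, fun h => absurd h1 h, ?_⟩
        · intro h; rw [Prod.ext_iff] at h; exact h2 h.2
        · rw [h1, quadraticChar_zero, zero_mul]
          rcases hδ with rfl | rfl <;> omega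
      rw [tInd, if_neg hnw, h1]
      simp [uu_zero, zz_zero, quadraticChar_zero, zz_ne h2]
  · by_cases h2 : w.2 = 0
    · have : Tpred δ w := Or.inr (Or.inl ⟨h1, h2⟩)
      rw [tInd, if_pos this, h2, uu_ne h1, zz_ne h1, vv_zero, quadraticChar_zero]
      ring
    · have hT : Tpred δ w ↔ quadraticChar K w.1 * quadraticChar K' w.2 = δ := by
        unfold Tpred
        constructor
        · rintro (h | h | h)
          · exact absurd (congrArg Prod.fst h) h1
          · exact absurd h.2 h2
          · exact h
        · exact fun h => Or.inr (Or.inr h)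
      rw [uu_ne h1, zz_ne h1, vv_ne h2, tInd]
      by_cases hp : Tpred δ w
      · rw [if_pos hp]
        rw [hT] at hp
        rw [hp]
        rcases hδ with rfl | rfl <;> norm_num
      · rw [if_neg hp]
        rw [hT] at hp
        have hprod : quadraticChar K w.1 * quadraticChar K' w.2 = -δ := by
          rcases quadraticChar_dichotomy h1 with hs | hs <;>
            rcases quadraticChar_dichotomy h2 with hs' | hs' <;>
            rcases hδ with rfl | rfl <;> revert hp <;> norm_num [hs, hs']
        rw [hprod]
        rcases hδ with rfl | rfl <;> norm_num

lemma sum_prod_split (f f' : K → ℤ) (h h' : K' → ℤ) (g1 : K) (g2 : K') :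
    ∑ d : K × K', (f d.1 * f' (d.1 - g1)) * (h d.2 * h' (d.2 - g2))
      = (∑ a, f a * f' (a - g1)) * (∑ b, h b * h' (b - g2)) := by
  rw [Finset.sum_mul_sum]
  exact Fintype.sum_prod_type _

lemma neg_one_product (hoddK : Odd (Fintype.card K))
    (h2 : Fintype.card K' = Fintype.card K + 2) :
    quadraticChar K (-1) * quadraticChar K' (-1) = -1 := by
  have hcK : ringChar K ≠ 2 := char_ne_two hoddK
  have hoddK' : Odd (Fintype.card K') := by
    rw [Nat.odd_iff] at hoddK ⊢; omega
  have hcK' : ringChar K' ≠ 2 := char_ne_two hoddK'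
  rw [quadraticChar_neg_one hcK, quadraticChar_neg_one hcK',
    ZMod.χ₄_nat_eq_if_mod_four, ZMod.χ₄_nat_eq_if_mod_four]
  have e1 : Fintype.card K % 2 = 1 := Nat.odd_iff.mp hoddK
  have e2 : Fintype.card K' % 2 = 1 := Nat.odd_iff.mp hoddK'
  rcases (by omega : Fintype.card K % 4 = 1 ∨ Fintype.card K % 4 = 3) with h | h
  · rw [if_neg (by omega), if_pos h, if_neg (by omega), if_neg (by omega)]
    norm_num
  · rw [if_neg (by omega), if_neg (by omega), if_neg (by omega), if_pos (by omega)]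
    norm_num

lemma count_eq_sum (δ : ℤ) (g : K × K') :
    ((((Tset δ : Finset (K × K')) ×ˢ Tset δ).filter (fun p => p.1 - p.2 = g)).card : ℤ)
      = ∑ d : K × K', tInd δ d * tInd δ (d - g) := by
  have hcard : (((Tset δ : Finset (K × K')) ×ˢ Tset δ).filter (fun p => p.1 - p.2 = g)).card
      = (Finset.univ.filter (fun d : K × K' => Tpred δ d ∧ Tpred δ (d - g))).card := by
    apply Finset.card_bij' (i := fun p _ => p.1) (j := fun d _ => (d, d - g))
    · intro p hp
      simp only [Finset.mem_filter, Finset.mem_product, Tset] at hp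
      obtain ⟨⟨hp1, hp2⟩, hpe⟩ := hp
      simp only [Finset.mem_filter, Finset.mem_univ, true_and] at hp1 hp2 ⊢
      constructor
      · exact hp1
      · have : p.2 = p.1 - g := by rw [← hpe]; ring
        rw [← this]; exact hp2
    · intro d hd
      simp only [Finset.mem_filter, Finset.mem_univ, true_and] at hd
      simp only [Finset.mem_filter, Finset.mem_product, Tset, Finset.mem_univ, true_and]
      exact ⟨⟨hd.1, hd.2⟩, by ring⟩
    · intro p hp
      simp only [Finset.mem_filter] at hp
      have : p.1 - g = p.2 := by rw [← hp.2]; ring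
      rw [this]
    · intro d hd; rfl
  rw [hcard, Finset.card_filter]
  push_cast
  apply Finset.sum_congr rfl
  intro d _
  by_cases h1 : Tpred δ d <;> by_cases h2 : Tpred δ (d - g) <;>
    simp [tInd, h1, h2]

theorem Tset_count {δ : ℤ} (hδ : δ = 1 ∨ δ = -1) (hoddK : Odd (Fintype.card K))
    (h2 : Fintype.card K' = Fintype.card K + 2)
    (g : K × K') (hg : g ≠ 0) :
    4 * ((((Tset δ : Finset (K × K')) ×ˢ Tset δ).filter (fun p => p.1 - p.2 = g)).card : ℤ)
      = (Fintype.card K : ℤ) * (Fintype.card K' : ℤ) - 3 := by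
  have hoddK' : Odd (Fintype.card K') := by rw [Nat.odd_iff] at hoddK ⊢; omega
  have hδ2 : δ * δ = 1 := by rcases hδ with rfl | rfl <;> norm_num
  rw [count_eq_sum]
  have key : ∀ d : K × K', 4 * (tInd δ d * tInd δ (d - g)) =
      (uu d.1 * uu (d.1 - g.1)) * (vv d.2 * vv (d.2 - g.2))
      + 2 * ((uu d.1 * zz (d.1 - g.1)) * (vv d.2 * zz (d.2 - g.2)))
      + δ * ((uu d.1 * quadraticChar K (d.1 - g.1)) * (vv d.2 * quadraticChar K' (d.2 - g.2)))
      + 2 * ((zz d.1 * uu (d.1 - g.1)) * (zz d.2 * vv (d.2 - g.2)))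
      + 4 * ((zz d.1 * zz (d.1 - g.1)) * (zz d.2 * zz (d.2 - g.2)))
      + (2 * δ) * ((zz d.1 * quadraticChar K (d.1 - g.1)) * (zz d.2 * quadraticChar K' (d.2 - g.2)))
      + δ * ((quadraticChar K d.1 * uu (d.1 - g.1)) * (quadraticChar K' d.2 * vv (d.2 - g.2)))
      + (2 * δ) * ((quadraticChar K d.1 * zz (d.1 - g.1)) * (quadraticChar K' d.2 * zz (d.2 - g.2)))
      + (δ * δ) * ((quadraticChar K d.1 * quadraticChar K (d.1 - g.1))
          * (quadraticChar K' d.2 * quadraticChar K' (d.2 - g.2))) := by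
    intro d
    have e1 := two_tInd hδ d
    have e2 := two_tInd hδ (d - g)
    have h4 : 4 * (tInd δ d * tInd δ (d - g)) = (2 * tInd δ d) * (2 * tInd δ (d - g)) := by ring
    rw [h4, e1, e2]
    have hfst : (d - g).1 = d.1 - g.1 := rfl
    have hsnd : (d - g).2 = d.2 - g.2 := rfl
    rw [hfst, hsnd]
    ring
  rw [Finset.mul_sum, Finset.sum_congr rfl fun d _ => key d]
  simp only [Finset.sum_add_distrib]
  simp only [← Finset.mul_sum]
  rw [sum_prod_split uu uu vv vv, sum_prod_split uu zz vv zz,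
    sum_prod_split uu (quadraticChar K) vv (quadraticChar K'),
    sum_prod_split zz uu zz vv, sum_prod_split zz zz zz zz,
    sum_prod_split zz (quadraticChar K) zz (quadraticChar K'),
    sum_prod_split (quadraticChar K) uu (quadraticChar K') vv,
    sum_prod_split (quadraticChar K) zz (quadraticChar K') zz,
    sum_prod_split (quadraticChar K) (quadraticChar K) (quadraticChar K') (quadraticChar K')]
  rw [conv_uu_uu, conv_vv_vv, conv_uu_zz, conv_vv_zz, conv_uu_chi hoddK, conv_vv_chi hoddK',
    conv_zz_uu, conv_zz_vv, conv_zz_zz, conv_zz_zz, conv_zz_chi, conv_zz_chi,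
    conv_chi_uu hoddK, conv_chi_vv hoddK', conv_chi_zz, conv_chi_zz]
  have hQ' : (Fintype.card K' : ℤ) = (Fintype.card K : ℤ) + 2 := by
    rw [h2]; push_cast; ring
  have hP := neg_one_product hoddK h2
  have hcn : ∀ c : K, quadraticChar K (-c) = quadraticChar K (-1) * quadraticChar K c :=
    fun c => chi_neg c
  have hcn' : ∀ c : K', quadraticChar K' (-c) = quadraticChar K' (-1) * quadraticChar K' c :=
    fun c => chi_neg c
  rw [hcn, hcn']
  by_cases hg1 : g.1 = 0
  · have hg2 : g.2 ≠ 0 := by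
      intro h; exact hg (Prod.ext hg1 h)
    rw [hg1]
    rw [conv_chi_chi_zero hoddK, sum_chi_chi hoddK' hg2]
    simp only [quadraticChar_zero, zz_zero, uu_zero, neg_zero, mul_zero, zero_mul]
    rw [zz_ne hg2, hδ2, hQ']
    ring
  · by_cases hg2 : g.2 = 0
    · rw [hg2]
      rw [sum_chi_chi hoddK hg1, conv_chi_chi_zero hoddK']
      simp only [quadraticChar_zero, zz_zero, vv_zero, neg_zero, mul_zero, zero_mul]
      rw [uu_ne hg1, zz_ne hg1, hδ2, hQ']
      ring
    · rw [sum_chi_chi hoddK hg1, sum_chi_chi hoddK' hg2]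
      rw [uu_ne hg1, zz_ne hg1, zz_ne hg2, vv_ne hg2, hQ', hδ2]
      -- remaining: identity using hP
      linear_combination (δ * quadraticChar K g.1 * quadraticChar K' g.2) * hP

theorem Tset_card {δ : ℤ} (hδ : δ = 1 ∨ δ = -1) (hoddK : Odd (Fintype.card K))
    (h2 : Fintype.card K' = Fintype.card K + 2) :
    2 * ((Tset δ : Finset (K × K')).card : ℤ)
      = (Fintype.card K : ℤ) * (Fintype.card K' : ℤ) - 1 := by
  have hoddK' : Odd (Fintype.card K') := by rw [Nat.odd_iff] at hoddK ⊢; omega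
  have hc : ((Tset δ : Finset (K × K')).card : ℤ) = ∑ w : K × K', tInd δ w := by
    rw [Tset, Finset.card_filter]
    push_cast
    apply Finset.sum_congr rfl
    intro w _
    by_cases h : Tpred δ w <;> simp [tInd, h]
  rw [hc, Finset.mul_sum, Finset.sum_congr rfl fun w _ => two_tInd hδ w]
  simp only [Finset.sum_add_distrib]
  simp only [← Finset.mul_sum]
  have e1 : ∑ w : K × K', uu w.1 * vv w.2 = (∑ a : K, uu a) * (∑ b : K', vv b) := by
    rw [Finset.sum_mul_sum]; exact Fintype.sum_prod_type _
  have e2 : ∑ w : K × K', zz w.1 * zz w.2 = (∑ a : K, zz a) * (∑ b : K', zz b) := by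
    rw [Finset.sum_mul_sum]; exact Fintype.sum_prod_type _
  have e3 : ∑ w : K × K', quadraticChar K w.1 * quadraticChar K' w.2
      = (∑ a : K, quadraticChar K a) * (∑ b : K', quadraticChar K' b) := by
    rw [Finset.sum_mul_sum]; exact Fintype.sum_prod_type _
  rw [e1, e2, e3, sum_uu, sum_vv, sum_zz_only, sum_zz_only, sum_chi hoddK, sum_chi hoddK']
  have hQ' : (Fintype.card K' : ℤ) = (Fintype.card K : ℤ) + 2 := by rw [h2]; push_cast; ring
  rw [hQ']
  ring

theorem union_form_eq_Tset (α : K) (β : K')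
    (hsurjα : ∀ x : K, x ≠ 0 → ∃ m : ℕ, α ^ m = x)
    (hsurjβ : ∀ x : K', x ≠ 0 → ∃ m : ℕ, β ^ m = x)
    (hc3 : 3 ≤ Fintype.card K) (hc3' : 3 ≤ Fintype.card K')
    (hoddK : Odd (Fintype.card K)) (hoddK' : Odd (Fintype.card K'))
    {c1 : K} {c2 : K'} (hc1 : c1 ≠ 0) (hc2 : c2 ≠ 0) :
    ((Finset.range ((Fintype.card K - 1)/2) ×ˢ Finset.range ((Fintype.card K' - 1)/2)).image
        (fun p => ((c1 * α ^ (2*p.1), c2 * β ^ (2*p.2)) : K × K')) ∪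
      (Finset.range ((Fintype.card K - 1)/2) ×ˢ Finset.range ((Fintype.card K' - 1)/2)).image
        (fun p => ((c1 * α ^ (2*p.1+1), c2 * β ^ (2*p.2+1)) : K × K'))) ∪
    insert (0 : K × K')
      ((Finset.range (Fintype.card K - 1)).image (fun i => ((c1 * α ^ i, 0) : K × K')))
    = Tset (quadraticChar K c1 * quadraticChar K' c2) := by
  ext w
  simp only [Finset.mem_union, Finset.mem_insert, Finset.mem_image, Finset.mem_product,
    Finset.mem_range, Tset, Tpred, Finset.mem_filter, Finset.mem_univ, true_and]
  constructor
  · rintro ((⟨p, ⟨hp1, hp2⟩, rfl⟩ | ⟨p, ⟨hp1, hp2⟩, rfl⟩) | (rfl | ⟨i, hi, rfl⟩))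
    · refine Or.inr (Or.inr ?_)
      have h1 : quadraticChar K (c1 * α ^ (2 * p.1)) = quadraticChar K c1 :=
        (mem_even α hsurjα hc3 hoddK hc1 _).mp ⟨p.1, hp1, rfl⟩
      have h2 : quadraticChar K' (c2 * β ^ (2 * p.2)) = quadraticChar K' c2 :=
        (mem_even β hsurjβ hc3' hoddK' hc2 _).mp ⟨p.2, hp2, rfl⟩
      rw [h1, h2]
    · refine Or.inr (Or.inr ?_)
      have h1 : quadraticChar K (c1 * α ^ (2 * p.1 + 1)) = -quadraticChar K c1 :=
        (mem_odd α hsurjα hc3 hoddK hc1 _).mp ⟨p.1, hp1, rfl⟩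
      have h2 : quadraticChar K' (c2 * β ^ (2 * p.2 + 1)) = -quadraticChar K' c2 :=
        (mem_odd β hsurjβ hc3' hoddK' hc2 _).mp ⟨p.2, hp2, rfl⟩
      rw [h1, h2, neg_mul_neg]
    · exact Or.inl rfl
    · exact Or.inr (Or.inl ⟨mul_ne_zero hc1 (pow_ne_zero _ (alpha_ne_zero α hsurjα hc3)), rfl⟩)
  · rintro (rfl | ⟨hw1, hw2⟩ | hchi)
    · exact Or.inr (Or.inl rfl)
    · refine Or.inr (Or.inr ?_)
      obtain ⟨i, hi, hix⟩ := (mem_all α hsurjα hc3 hc1 w.1).mpr hw1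
      exact ⟨i, hi, Prod.ext hix hw2.symm⟩
    · -- character class case
      have hc1d := quadraticChar_dichotomy hc1
      have hc2d := quadraticChar_dichotomy hc2
      have hw1 : w.1 ≠ 0 := by
        intro h
        rw [h, quadraticChar_zero, zero_mul] at hchi
        rcases hc1d with h' | h' <;> rcases hc2d with h'' | h'' <;>
          rw [h', h''] at hchi <;> norm_num at hchi
      have hw2 : w.2 ≠ 0 := by
        intro h
        rw [h, quadraticChar_zero, mul_zero] at hchi
        rcases hc1d with h' | h' <;> rcases hc2d with h'' | h'' <;>
          rw [h', h''] at hchi <;> norm_num at hchi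
      have hcne : quadraticChar K c1 ≠ 0 := by rcases hc1d with h' | h' <;> rw [h'] <;> norm_num
      rcases quadraticChar_dichotomy hw1 with hs | hs <;> rcases hc1d with hs1 | hs1
      -- case analysis on whether χ w.1 = χ c1 or = -χ c1
      all_goals {
        first
        | -- equal case
          (have heq : quadraticChar K w.1 = quadraticChar K c1 := by rw [hs, hs1]
           have heq2 : quadraticChar K' w.2 = quadraticChar K' c2 := by
             rw [heq] at hchi
             exact mul_left_cancel₀ hcne hchi
           obtain ⟨i, hi, hix⟩ := (mem_even α hsurjα hc3 hoddK hc1 w.1).mpr heq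
           obtain ⟨j, hj, hjx⟩ := (mem_even β hsurjβ hc3' hoddK' hc2 w.2).mpr heq2
           exact Or.inl (Or.inl ⟨(i, j), ⟨hi, hj⟩, Prod.ext hix hjx⟩))
        | -- negated case
          (have heq : quadraticChar K w.1 = -quadraticChar K c1 := by rw [hs, hs1]; try norm_num
           have heq2 : quadraticChar K' w.2 = -quadraticChar K' c2 := by
             rw [heq] at hchi
             have h3 : quadraticChar K c1 * (- quadraticChar K' w.2)
                 = quadraticChar K c1 * quadraticChar K' c2 := by
               rw [← hchi]; ring
             have := mul_left_cancel₀ hcne h3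
             linarith [this]
           obtain ⟨i, hi, hix⟩ := (mem_odd α hsurjα hc3 hoddK hc1 w.1).mpr heq
           obtain ⟨j, hj, hjx⟩ := (mem_odd β hsurjβ hc3' hoddK' hc2 w.2).mpr heq2
           exact Or.inl (Or.inr ⟨(i, j), ⟨hi, hj⟩, Prod.ext hix hjx⟩))
      }


end Product

end TPP

open TPP


/-- A (v,k,λ) difference set in an additive group G: a k-subset D such that every
nonzero g has exactly λ representations g = d₁ - d₂ with d₁,d₂ ∈ D. -/
def IsAddDiffSet {G : Type*} [AddGroup G] [DecidableEq G] (v k lam : ℕ)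
    (D : Finset G) : Prop :=
  D.card = k ∧ ∀ g : G, g ≠ 0 →
    ((D ×ˢ D).filter (fun p => p.1 - p.2 = g)).card = lam

/-- An n-dimensional (v,k,λ) difference set in an additive group G. -/
def IsAddDiffSetN {G : Type*} [AddGroup G] [DecidableEq G] (n v k lam : ℕ)
    (D : Finset (Fin n → G)) : Prop :=
  D.card = k ∧ ∀ x y : Fin n, x < y →
    IsAddDiffSet v k lam (D.image (fun d => d x - d y))

theorem twin_prime_power_qdim_diffSet
    {F F' : Type*} [Field F] [Fintype F] [DecidableEq F]
    [Field F'] [Fintype F'] [DecidableEq F']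
    (q : ℕ) (hodd : Odd q) (hq : Fintype.card F = q) (hq' : Fintype.card F' = q + 2)
    (α : F) (hα : ∀ x : F, x ≠ 0 → ∃ m : ℕ, α ^ m = x)
    (β : F') (hβ : ∀ x : F', x ≠ 0 → ∃ m : ℕ, β ^ m = x)
    (m : ℕ) (hm : m = (q + 1) ^ 2 / 4)
    (a : ℕ → ℕ → ℕ → F × F') (ha : ∀ i j x, a i j x = (α ^ (2 * i + x), β ^ (2 * j + x)))
    (b : ℕ → ℕ → F × F') (hb : ∀ i x, b i x = (α ^ (i + x), 0))
    (E1 E2 E3 D : Finset (Fin q → F × F'))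
    (hE1 : E1 = ((Finset.range ((q - 1) / 2)) ×ˢ (Finset.range ((q + 1) / 2))).image
      (fun p => fun x : Fin q =>
        if (x : ℕ) = 0 then 0 else a p.1 p.2 ((x : ℕ) - 1)))
    (hE2 : E2 = ((Finset.range ((q - 1) / 2)) ×ˢ (Finset.range ((q + 1) / 2))).image
      (fun p => fun x : Fin q =>
        if (x : ℕ) = 0 then 0 else a p.1 p.2 (x : ℕ)))
    (hE3 : E3 = {(fun _ : Fin q => (0 : F × F'))} ∪
      (Finset.range (q - 1)).image (fun i => fun x : Fin q =>
        if (x : ℕ) = 0 then 0 else b i ((x : ℕ) - 1)))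
    (hD : D = E1 ∪ E2 ∪ E3) :
    IsAddDiffSetN q (4 * m - 1) (2 * m - 1) (m - 1) D := by
  subst hq
  -- basic numerology
  have hq2 : Fintype.card F % 2 = 1 := Nat.odd_iff.mp hodd
  have hq3 : 3 ≤ Fintype.card F := by
    have := Fintype.one_lt_card (α := F)
    omega
  have hodd' : Odd (Fintype.card F') := by rw [Nat.odd_iff]; omega
  have hq3' : 3 ≤ Fintype.card F' := by omega
  have hhalf : (Fintype.card F' - 1) / 2 = (Fintype.card F + 1) / 2 := by omega
  obtain ⟨r, hr⟩ := id hodd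
  have hmN : m = (r + 1) ^ 2 := by
    have h4 : (Fintype.card F + 1) ^ 2 = 4 * ((r + 1) ^ 2) := by rw [hr]; ring
    rw [hm, h4, Nat.mul_div_cancel_left _ (by norm_num)]
  have hmZ : (m : ℤ) = ((r : ℤ) + 1) ^ 2 := by rw [hmN]; push_cast; ring
  have hcaZ : (Fintype.card F : ℤ) = 2 * (r : ℤ) + 1 := by rw [hr]; push_cast; ring
  have hca'Z : (Fintype.card F' : ℤ) = 2 * (r : ℤ) + 3 := by rw [hq', hr]; push_cast; ring
  -- the generic difference-set property of the T-sets
  have hTdiff : ∀ δ : ℤ, δ = 1 ∨ δ = -1 →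
      IsAddDiffSet (4 * m - 1) (2 * m - 1) (m - 1) (Tset δ : Finset (F × F')) := by
    intro δ hδ
    constructor
    · have hZ := Tset_card (K := F) (K' := F') hδ hodd hq'
      rw [hcaZ, hca'Z] at hZ
      have h4 : 2 * (((Tset δ : Finset (F × F')).card : ℤ)) = 4 * (m : ℤ) - 2 := by
        rw [hZ, hmZ]; ring
      omega
    · intro g hg
      have hZ := Tset_count (K := F) (K' := F') hδ hodd hq' g hg
      rw [hcaZ, hca'Z] at hZ
      have h4 : 4 * ((((Tset δ : Finset (F × F')) ×ˢ Tset δ).filter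
          (fun p => p.1 - p.2 = g)).card : ℤ) = 4 * (m : ℤ) - 4 := by
        rw [hZ, hmZ]; ring
      omega
  -- the image machinery
  have himage : ∀ (f : (Fin (Fintype.card F) → F × F') → F × F') (c1 : F) (c2 : F'),
      c1 ≠ 0 → c2 ≠ 0 →
      (∀ p : ℕ × ℕ, f (fun x : Fin (Fintype.card F) =>
        if (x : ℕ) = 0 then 0 else a p.1 p.2 ((x : ℕ) - 1))
          = (c1 * α ^ (2 * p.1), c2 * β ^ (2 * p.2))) →
      (∀ p : ℕ × ℕ, f (fun x : Fin (Fintype.card F) =>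
        if (x : ℕ) = 0 then 0 else a p.1 p.2 (x : ℕ))
          = (c1 * α ^ (2 * p.1 + 1), c2 * β ^ (2 * p.2 + 1))) →
      (f (fun _ : Fin (Fintype.card F) => (0 : F × F')) = 0) →
      (∀ i : ℕ, f (fun x : Fin (Fintype.card F) =>
        if (x : ℕ) = 0 then 0 else b i ((x : ℕ) - 1)) = (c1 * α ^ i, 0)) →
      D.image f = Tset (quadraticChar F c1 * quadraticChar F' c2) := by
    intro f c1 c2 hc1 hc2 h1 h2 h0 h3
    rw [hD, Finset.image_union, Finset.image_union, hE1, hE2, hE3, Finset.image_union,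
      Finset.image_singleton, Finset.image_image, Finset.image_image, Finset.image_image,
      h0, ← Finset.insert_eq]
    simp only [Function.comp_def]
    have e1 := Finset.image_congr (s := (Finset.range ((Fintype.card F - 1) / 2)
        ×ˢ Finset.range ((Fintype.card F + 1) / 2)))
      (g := fun p : ℕ × ℕ => ((c1 * α ^ (2 * p.1), c2 * β ^ (2 * p.2)) : F × F'))
      (fun p _ => h1 p)
    have e2 := Finset.image_congr (s := (Finset.range ((Fintype.card F - 1) / 2)
        ×ˢ Finset.range ((Fintype.card F + 1) / 2)))
      (g := fun p : ℕ × ℕ => ((c1 * α ^ (2 * p.1 + 1), c2 * β ^ (2 * p.2 + 1)) : F × F'))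
      (fun p _ => h2 p)
    have e3 := Finset.image_congr (s := Finset.range (Fintype.card F - 1))
      (g := fun i : ℕ => ((c1 * α ^ i, 0) : F × F'))
      (fun i _ => h3 i)
    rw [e1, e2, e3]
    have hu := union_form_eq_Tset α β hα hβ hq3 hq3' hodd hodd' hc1 hc2
    rw [hhalf] at hu
    exact hu
  -- sign dichotomy helper
  have hsign : ∀ (c1 : F) (c2 : F'), c1 ≠ 0 → c2 ≠ 0 →
      quadraticChar F c1 * quadraticChar F' c2 = 1
        ∨ quadraticChar F c1 * quadraticChar F' c2 = -1 := by
    intro c1 c2 hc1 hc2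
    rcases quadraticChar_dichotomy hc1 with h | h <;>
      rcases quadraticChar_dichotomy hc2 with h' | h' <;> rw [h, h'] <;> norm_num
  constructor
  · -- cardinality of D via evaluation at position 1
    have hlt1 : 1 < Fintype.card F := by omega
    have hα0 : α ≠ 0 := alpha_ne_zero α hα hq3
    have hβ0 : β ≠ 0 := alpha_ne_zero β hβ hq3'
    have hval1 : ∀ p : ℕ × ℕ,
        (fun x : Fin (Fintype.card F) =>
          if (x : ℕ) = 0 then (0 : F × F') else a p.1 p.2 ((x : ℕ) - 1)) ⟨1, hlt1⟩
        = (α ^ (2 * p.1), β ^ (2 * p.2)) := by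
      intro p
      simp only []
      rw [if_neg (by simp), ha]
      try simp
    have hval2 : ∀ p : ℕ × ℕ,
        (fun x : Fin (Fintype.card F) =>
          if (x : ℕ) = 0 then (0 : F × F') else a p.1 p.2 (x : ℕ)) ⟨1, hlt1⟩
        = (α ^ (2 * p.1 + 1), β ^ (2 * p.2 + 1)) := by
      intro p
      simp only []
      rw [if_neg (by simp), ha]
      try simp
    have hval3 : ∀ i : ℕ,
        (fun x : Fin (Fintype.card F) =>
          if (x : ℕ) = 0 then (0 : F × F') else b i ((x : ℕ) - 1)) ⟨1, hlt1⟩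
        = (α ^ i, 0) := by
      intro i
      simp only []
      rw [if_neg (by simp), hb]
      try simp
    have hmemD : ∀ d ∈ D,
        (∃ p : ℕ × ℕ, (p.1 < (Fintype.card F - 1) / 2 ∧ p.2 < (Fintype.card F + 1) / 2) ∧
          d = fun x : Fin (Fintype.card F) =>
            if (x : ℕ) = 0 then 0 else a p.1 p.2 ((x : ℕ) - 1)) ∨
        (∃ p : ℕ × ℕ, (p.1 < (Fintype.card F - 1) / 2 ∧ p.2 < (Fintype.card F + 1) / 2) ∧
          d = fun x : Fin (Fintype.card F) =>
            if (x : ℕ) = 0 then 0 else a p.1 p.2 (x : ℕ)) ∨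
        d = (fun _ : Fin (Fintype.card F) => (0 : F × F')) ∨
        (∃ i : ℕ, i < Fintype.card F - 1 ∧
          d = fun x : Fin (Fintype.card F) =>
            if (x : ℕ) = 0 then 0 else b i ((x : ℕ) - 1)) := by
      intro d hd
      rw [hD, Finset.mem_union, Finset.mem_union] at hd
      rcases hd with (h | h) | h
      · left
        rw [hE1, Finset.mem_image] at h
        obtain ⟨p, hp, hpe⟩ := h
        rw [Finset.mem_product, Finset.mem_range, Finset.mem_range] at hp
        exact ⟨p, hp, hpe.symm⟩
      · right; left
        rw [hE2, Finset.mem_image] at h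
        obtain ⟨p, hp, hpe⟩ := h
        rw [Finset.mem_product, Finset.mem_range, Finset.mem_range] at hp
        exact ⟨p, hp, hpe.symm⟩
      · rw [hE3, Finset.mem_union, Finset.mem_singleton, Finset.mem_image] at h
        rcases h with h | h
        · right; right; left; exact h
        · right; right; right
          obtain ⟨i, hi, hie⟩ := h
          rw [Finset.mem_range] at hi
          exact ⟨i, hi, hie.symm⟩
    have hinj : Set.InjOn (fun d : Fin (Fintype.card F) → F × F' => d ⟨1, hlt1⟩) D := by
      intro d1 hd1 d2 hd2 he
      simp only [] at he
      rcases hmemD d1 hd1 with ⟨p, hp, rfl⟩ | ⟨p, hp, rfl⟩ | rfl | ⟨i, hi, rfl⟩ <;>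
        rcases hmemD d2 hd2 with ⟨p', hp', rfl⟩ | ⟨p', hp', rfl⟩ | rfl | ⟨i', hi', rfl⟩
      · -- 1,1
        have hAB : ((α ^ (2 * p.1) : F), (β ^ (2 * p.2) : F'))
            = (α ^ (2 * p'.1), β ^ (2 * p'.2)) := by
          rw [← hval1 p, ← hval1 p']; exact he
        rw [Prod.mk.injEq] at hAB
        have h1 := pow_inj α hα hq3 (by omega) (by omega) hAB.1
        have h2 := pow_inj β hβ hq3' (by omega) (by omega) hAB.2
        rw [show p = p' from Prod.ext (by omega) (by omega)]
      · -- 1,2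
        have hAB : ((α ^ (2 * p.1) : F), (β ^ (2 * p.2) : F'))
            = (α ^ (2 * p'.1 + 1), β ^ (2 * p'.2 + 1)) := by
          rw [← hval1 p, ← hval2 p']; exact he
        rw [Prod.mk.injEq] at hAB
        have h1 := pow_inj α hα hq3 (by omega) (by omega) hAB.1
        omega
      · -- 1,0
        have hAB : ((α ^ (2 * p.1) : F), (β ^ (2 * p.2) : F')) = (0, 0) := by
          rw [← hval1 p]; exact he
        rw [Prod.mk.injEq] at hAB
        exact absurd hAB.1 (pow_ne_zero _ hα0)
      · -- 1,3
        have hAB : ((α ^ (2 * p.1) : F), (β ^ (2 * p.2) : F')) = (α ^ i', 0) := by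
          rw [← hval1 p, ← hval3 i']; exact he
        rw [Prod.mk.injEq] at hAB
        exact absurd hAB.2 (pow_ne_zero _ hβ0)
      · -- 2,1
        have hAB : ((α ^ (2 * p.1 + 1) : F), (β ^ (2 * p.2 + 1) : F'))
            = (α ^ (2 * p'.1), β ^ (2 * p'.2)) := by
          rw [← hval2 p, ← hval1 p']; exact he
        rw [Prod.mk.injEq] at hAB
        have h1 := pow_inj α hα hq3 (by omega) (by omega) hAB.1
        omega
      · -- 2,2
        have hAB : ((α ^ (2 * p.1 + 1) : F), (β ^ (2 * p.2 + 1) : F'))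
            = (α ^ (2 * p'.1 + 1), β ^ (2 * p'.2 + 1)) := by
          rw [← hval2 p, ← hval2 p']; exact he
        rw [Prod.mk.injEq] at hAB
        have h1 := pow_inj α hα hq3 (by omega) (by omega) hAB.1
        have h2 := pow_inj β hβ hq3' (by omega) (by omega) hAB.2
        rw [show p = p' from Prod.ext (by omega) (by omega)]
      · -- 2,0
        have hAB : ((α ^ (2 * p.1 + 1) : F), (β ^ (2 * p.2 + 1) : F')) = (0, 0) := by
          rw [← hval2 p]; exact he
        rw [Prod.mk.injEq] at hAB
        exact absurd hAB.1 (pow_ne_zero _ hα0)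
      · -- 2,3
        have hAB : ((α ^ (2 * p.1 + 1) : F), (β ^ (2 * p.2 + 1) : F')) = (α ^ i', 0) := by
          rw [← hval2 p, ← hval3 i']; exact he
        rw [Prod.mk.injEq] at hAB
        exact absurd hAB.2 (pow_ne_zero _ hβ0)
      · -- 0,1
        have hAB : ((0 : F), (0 : F')) = (α ^ (2 * p'.1), β ^ (2 * p'.2)) := by
          rw [← hval1 p']; exact he
        rw [Prod.mk.injEq] at hAB
        exact absurd hAB.1.symm (pow_ne_zero _ hα0)
      · -- 0,2
        have hAB : ((0 : F), (0 : F')) = (α ^ (2 * p'.1 + 1), β ^ (2 * p'.2 + 1)) := by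
          rw [← hval2 p']; exact he
        rw [Prod.mk.injEq] at hAB
        exact absurd hAB.1.symm (pow_ne_zero _ hα0)
      · -- 0,0
        rfl
      · -- 0,3
        have hAB : ((0 : F), (0 : F')) = (α ^ i', (0 : F')) := by
          rw [← hval3 i']; exact he
        rw [Prod.mk.injEq] at hAB
        exact absurd hAB.1.symm (pow_ne_zero _ hα0)
      · -- 3,1
        have hAB : ((α ^ i : F), (0 : F')) = (α ^ (2 * p'.1), β ^ (2 * p'.2)) := by
          rw [← hval3 i, ← hval1 p']; exact he
        rw [Prod.mk.injEq] at hAB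
        exact absurd hAB.2.symm (pow_ne_zero _ hβ0)
      · -- 3,2
        have hAB : ((α ^ i : F), (0 : F')) = (α ^ (2 * p'.1 + 1), β ^ (2 * p'.2 + 1)) := by
          rw [← hval3 i, ← hval2 p']; exact he
        rw [Prod.mk.injEq] at hAB
        exact absurd hAB.2.symm (pow_ne_zero _ hβ0)
      · -- 3,0
        have hAB : ((α ^ i : F), (0 : F')) = (0, 0) := by
          rw [← hval3 i]; exact he
        rw [Prod.mk.injEq] at hAB
        exact absurd hAB.1 (pow_ne_zero _ hα0)
      · -- 3,3
        have hAB : ((α ^ i : F), (0 : F')) = (α ^ i', (0 : F')) := by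
          rw [← hval3 i, ← hval3 i']; exact he
        rw [Prod.mk.injEq] at hAB
        have h1 := pow_inj α hα hq3 (by omega) (by omega) hAB.1
        rw [h1]
    have hcardimg := Finset.card_image_of_injOn hinj
    have himg1 := himage (fun d => d ⟨1, hlt1⟩) 1 1 one_ne_zero one_ne_zero
      (fun p => (hval1 p).trans (by rw [one_mul, one_mul]))
      (fun p => (hval2 p).trans (by rw [one_mul, one_mul]))
      rfl
      (fun i => (hval3 i).trans (by rw [one_mul]))
    rw [map_one, map_one, mul_one] at himg1
    rw [← hcardimg, himg1]
    exact (hTdiff 1 (Or.inl rfl)).1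
  · -- the difference sets
    intro x y hxy
    have hxylt : (x : ℕ) < (y : ℕ) := hxy
    have hy0 : (y : ℕ) ≠ 0 := by omega
    have hylt : (y : ℕ) < Fintype.card F := y.isLt
    by_cases hx0 : (x : ℕ) = 0
    · -- case x = 0
      set c1 : F := -α ^ ((y : ℕ) - 1) with hc1def
      set c2 : F' := -β ^ ((y : ℕ) - 1) with hc2def
      have hc1 : c1 ≠ 0 :=
        neg_ne_zero.mpr (pow_ne_zero _ (alpha_ne_zero α hα hq3))
      have hc2 : c2 ≠ 0 :=
        neg_ne_zero.mpr (pow_ne_zero _ (alpha_ne_zero β hβ hq3'))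
      have himg := himage (fun d => d x - d y) c1 c2 hc1 hc2
        (by
          intro p
          simp only []
          rw [if_pos hx0, if_neg hy0, ha]
          rw [show ((0 : F × F')) = ((0 : F), (0 : F')) from rfl, Prod.mk_sub_mk,
            Prod.mk.injEq]
          constructor <;> (rw [pow_add]; ring))
        (by
          intro p
          simp only []
          rw [if_pos hx0, if_neg hy0, ha]
          rw [show ((0 : F × F')) = ((0 : F), (0 : F')) from rfl, Prod.mk_sub_mk,
            Prod.mk.injEq]
          constructor
          · rw [show 2 * p.1 + (y : ℕ) = (2 * p.1 + 1) + ((y : ℕ) - 1) by omega, pow_add]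
            ring
          · rw [show 2 * p.2 + (y : ℕ) = (2 * p.2 + 1) + ((y : ℕ) - 1) by omega, pow_add]
            ring)
        (by simp)
        (by
          intro i
          simp only []
          rw [if_pos hx0, if_neg hy0, hb]
          rw [show ((0 : F × F')) = ((0 : F), (0 : F')) from rfl, Prod.mk_sub_mk,
            Prod.mk.injEq]
          constructor
          · rw [pow_add]; ring
          · ring)
      rw [himg]
      exact hTdiff _ (hsign c1 c2 hc1 hc2)
    · -- case x ≥ 1
      set c1 : F := α ^ ((x : ℕ) - 1) - α ^ ((y : ℕ) - 1) with hc1def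
      set c2 : F' := β ^ ((x : ℕ) - 1) - β ^ ((y : ℕ) - 1) with hc2def
      have hc1 : c1 ≠ 0 := by
        apply sub_ne_zero.mpr
        intro h
        have := pow_inj α hα hq3 (by omega) (by omega) h
        omega
      have hc2 : c2 ≠ 0 := by
        apply sub_ne_zero.mpr
        intro h
        have := pow_inj β hβ hq3' (by omega) (by omega) h
        omega
      have himg := himage (fun d => d x - d y) c1 c2 hc1 hc2
        (by
          intro p
          simp only []
          rw [if_neg hx0, if_neg hy0, ha, ha, Prod.mk_sub_mk, Prod.mk.injEq]
          constructor <;> (rw [pow_add, pow_add]; ring))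
        (by
          intro p
          simp only []
          rw [if_neg hx0, if_neg hy0, ha, ha, Prod.mk_sub_mk, Prod.mk.injEq]
          constructor
          · rw [show 2 * p.1 + (x : ℕ) = (2 * p.1 + 1) + ((x : ℕ) - 1) by omega,
              show 2 * p.1 + (y : ℕ) = (2 * p.1 + 1) + ((y : ℕ) - 1) by omega,
              pow_add, pow_add]
            ring
          · rw [show 2 * p.2 + (x : ℕ) = (2 * p.2 + 1) + ((x : ℕ) - 1) by omega,
              show 2 * p.2 + (y : ℕ) = (2 * p.2 + 1) + ((y : ℕ) - 1) by omega,
              pow_add, pow_add]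
            ring)
        (by simp)
        (by
          intro i
          simp only []
          rw [if_neg hx0, if_neg hy0, hb, hb, Prod.mk_sub_mk, Prod.mk.injEq]
          constructor
          · rw [pow_add, pow_add]; ring
          · ring)
      rw [himg]
      exact hTdiff _ (hsign c1 c2 hc1 hc2)
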